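/- Let c ∈ ℂ and R = ℂ[t, t^{-1}, u | u² = t⁴ − 2ct² + 1]. Then for every integer k, in Ω¹_R/dR one has (6 + 2k)·(class of t^k u dt) = −2(k−3)·(class of t^{k−4}u dt) + 4kc·(class of t^{k−2}u dt). -/

import Mathlib

noncomputable section
open Polynomial LaurentPolynomial

/-- The ring `R = ℂ[t,t⁻¹][u]/(u² − (t⁴ − 2ct² + 1))`, realized by adjoining a root `u`
of `X² − (t⁴ − 2ct² + 1)` to the ring of Laurent polynomials `ℂ[t,t⁻¹]`. -/
abbrev DJKM (c : ℂ) : Type :=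
  AdjoinRoot ((X : Polynomial (LaurentPolynomial ℂ)) ^ 2 -
    Polynomial.C (T 4 - 2 * LaurentPolynomial.C c * T 2 + 1))

/-- The element `t^i` of `R`, for `i : ℤ`. -/
def tp (c : ℂ) (i : ℤ) : DJKM c := AdjoinRoot.of _ (T i)

/-- The element `u` of `R`. -/
def uu (c : ℂ) : DJKM c := AdjoinRoot.root _

/-- The subspace `dR ⊆ Ω¹_R` of exact differentials. -/
def dR (c : ℂ) : Submodule ℂ (KaehlerDifferential ℂ (DJKM c)) :=
  LinearMap.range (KaehlerDifferential.D ℂ (DJKM c)).toLinearMap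

/-- The class of `f·dg` in `Ω¹_R/dR`. -/
def cls (c : ℂ) (f g : DJKM c) : KaehlerDifferential ℂ (DJKM c) ⧸ dR c :=
  Submodule.Quotient.mk (f • KaehlerDifferential.D ℂ (DJKM c) g)

/-- `ω_k` : the class of `t^k·u·dt` in `Ω¹_R/dR`. -/
def w (c : ℂ) (k : ℤ) : KaehlerDifferential ℂ (DJKM c) ⧸ dR c :=
  cls c (tp c k * uu c) (tp c 1)

/-- `ω₀` : the class of `t⁻¹·dt` in `Ω¹_R/dR`. -/
def w0 (c : ℂ) : KaehlerDifferential ℂ (DJKM c) ⧸ dR c :=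
  cls c (tp c (-1)) (tp c 1)

lemma tp_mul (c : ℂ) (i j : ℤ) : tp c i * tp c j = tp c (i + j) := by
  rw [tp, tp, tp, ← map_mul, ← T_add]

lemma tp_zero (c : ℂ) : tp c 0 = 1 := by
  rw [tp, T_zero, map_one]

lemma algC (c : ℂ) : AdjoinRoot.of _ (LaurentPolynomial.C c) = algebraMap ℂ (DJKM c) c := by
  rw [IsScalarTower.algebraMap_apply ℂ (LaurentPolynomial ℂ) (DJKM c),
    LaurentPolynomial.algebraMap_apply, Algebra.algebraMap_self_apply, ← AdjoinRoot.algebraMap_eq]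

lemma uu_sq (c : ℂ) : uu c ^ 2 = tp c 4 - (2 * c) • tp c 2 + 1 := by
  have h := AdjoinRoot.eval₂_root ((X : Polynomial (LaurentPolynomial ℂ)) ^ 2 -
    Polynomial.C (T 4 - 2 * LaurentPolynomial.C c * T 2 + 1))
  simp [sub_eq_zero] at h
  rw [uu, h, algC, map_ofNat, Algebra.smul_def, map_mul, map_ofNat]
  norm_num [tp]

lemma D_tp (c : ℂ) (n : ℤ) :
    KaehlerDifferential.D ℂ (DJKM c) (tp c n)
      = (n : ℂ) • tp c (n - 1) • KaehlerDifferential.D ℂ (DJKM c) (tp c 1) := by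
  set D := KaehlerDifferential.D ℂ (DJKM c) with hD
  induction n using Int.induction_on with
  | zero => simp [tp_zero]
  | succ i ih =>
      push_cast at ih ⊢
      have h1 : tp c ((i:ℤ) + 1) = tp c i * tp c 1 := (tp_mul c i 1).symm
      rw [h1, Derivation.leibniz, ih,
        smul_comm (tp c 1) ((i:ℂ)), smul_smul (tp c 1), tp_mul,
        show (1:ℤ) + ((i:ℤ) - 1) = i by ring, show (i:ℤ) + 1 - 1 = i by ring,
        add_smul, one_smul]
      abel
  | pred i ih =>
      push_cast at ih ⊢
      have h1 : tp c (-(i:ℤ)) = tp c (-(i:ℤ) - 1) * tp c 1 := by rw [tp_mul]; ring_nf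
      have h2 : D (tp c (-(i:ℤ))) = tp c (-(i:ℤ)-1) • D (tp c 1)
          + tp c 1 • D (tp c (-(i:ℤ)-1)) := by
        rw [h1, Derivation.leibniz]
      have h3 : tp c 1 • D (tp c (-(i:ℤ)-1)) = (-(i:ℂ)) • tp c (-(i:ℤ)-1) • D (tp c 1)
          - tp c (-(i:ℤ)-1) • D (tp c 1) := by
        rw [← ih, h2]; abel
      have h4 : D (tp c (-(i:ℤ)-1)) = tp c (-1) • (tp c 1 • D (tp c (-(i:ℤ)-1))) := by
        rw [smul_smul, tp_mul]; norm_num [tp_zero]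
      rw [h4, h3, smul_sub, smul_comm (tp c (-1)) (-(i:ℂ)), smul_smul (tp c (-1)), tp_mul,
        show (-1:ℤ) + (-(i:ℤ) - 1) = -(i:ℤ) - 1 - 1 by ring, sub_smul, one_smul]

lemma uDu (c : ℂ) :
    uu c • KaehlerDifferential.D ℂ (DJKM c) (uu c)
      = ((2:ℂ) • tp c 3 - (2*c) • tp c 1) • KaehlerDifferential.D ℂ (DJKM c) (tp c 1) := by
  set D := KaehlerDifferential.D ℂ (DJKM c) with hD
  have huu : uu c * uu c = tp c 4 - (2 * c) • tp c 2 + 1 := by rw [← pow_two, uu_sq]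
  have h2 : D (uu c * uu c) = (2:ℂ) • (uu c • D (uu c)) := by
    rw [Derivation.leibniz, two_smul]
  have h3 : D (uu c * uu c) = (2:ℂ) • (((2:ℂ) • tp c 3 - (2*c) • tp c 1) • D (tp c 1)) := by
    rw [huu]
    simp only [hD, map_add, map_sub, Derivation.map_smul, Derivation.map_one_eq_zero,
      D_tp c 4, D_tp c 2, sub_smul, smul_assoc]
    simp only [smul_sub, smul_smul, add_zero]
    norm_num
    ring_nf
  have := h2.symm.trans h3
  exact smul_right_injective _ (two_ne_zero) this

lemma D_u3 (c : ℂ) :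
    KaehlerDifferential.D ℂ (DJKM c) (uu c ^ 3)
      = ((3:ℂ) • (uu c * ((2:ℂ) • tp c 3 - (2*c) • tp c 1)))
          • KaehlerDifferential.D ℂ (DJKM c) (tp c 1) := by
  set D := KaehlerDifferential.D ℂ (DJKM c) with hD
  have h : uu c ^ 2 • D (uu c)
      = (uu c * ((2:ℂ) • tp c 3 - (2*c) • tp c 1)) • D (tp c 1) := by
    simp only [pow_two]
    rw [mul_smul, uDu, mul_smul]
    rw [mul_smul]
  rw [Derivation.leibniz_pow]
  norm_num [h]
  rw [← Nat.cast_smul_eq_nsmul ℂ 3]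
  norm_num

lemma key (c : ℂ) (k : ℤ) :
    ((6:ℂ) + 2*(k:ℂ)) • ((tp c k * uu c) • KaehlerDifferential.D ℂ (DJKM c) (tp c 1))
      - ((-2*((k:ℂ)-3)) • ((tp c (k-4) * uu c) • KaehlerDifferential.D ℂ (DJKM c) (tp c 1))
        + (4*(k:ℂ)*c) • ((tp c (k-2) * uu c) • KaehlerDifferential.D ℂ (DJKM c) (tp c 1)))
      = KaehlerDifferential.D ℂ (DJKM c) ((2:ℂ) • (tp c (k-3) * uu c ^ 3)) := by
  have hu3 : uu c ^ 3 = uu c * (tp c 4 - (2 * c) • tp c 2 + 1) := by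
    rw [pow_succ, uu_sq, mul_comm]
  rw [Derivation.map_smul, Derivation.leibniz, D_u3, D_tp c (k-3)]
  rw [hu3]
  push_cast
  match_scalars
  rw [show k - 3 - 1 = k - 4 by ring]
  simp only [Algebra.smul_def, map_mul, map_ofNat, mul_one]
  have h1 : tp c (k-3) * tp c 3 = tp c k := by rw [tp_mul, show k-3+3 = k by ring]
  have h2 : tp c (k-3) * tp c 1 = tp c (k-2) := by rw [tp_mul, show k-3+1 = k-2 by ring]
  have h3 : tp c 4 * tp c (k-4) = tp c k := by rw [tp_mul, show (4:ℤ)+(k-4) = k by ring]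
  have h4 : tp c 2 * tp c (k-4) = tp c (k-2) := by rw [tp_mul, show (2:ℤ)+(k-4) = k-2 by ring]
  linear_combination (-(12:DJKM c) * uu c) * h1
    + ((12:DJKM c) * algebraMap ℂ (DJKM c) c * uu c) * h2
    + ((-2:DJKM c) * (algebraMap ℂ (DJKM c) (k:ℂ) - 3) * uu c) * h3
    + ((4:DJKM c) * algebraMap ℂ (DJKM c) c * (algebraMap ℂ (DJKM c) (k:ℂ) - 3) * uu c) * h4

/-- For every integer `k`, in `Ω¹_R/dR` one has
`(6+2k)·(t^k u dt) = −2(k−3)·(t^{k−4} u dt) + 4kc·(t^{k−2} u dt)`. -/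
theorem stmt1 (c : ℂ) (k : ℤ) :
    ((6 : ℂ) + 2 * (k : ℂ)) • w c k =
      (-2 * ((k : ℂ) - 3)) • w c (k - 4) + (4 * (k : ℂ) * c) • w c (k - 2) := by
  rw [w, w, w, cls, cls, cls, ← Submodule.Quotient.mk_smul, ← Submodule.Quotient.mk_smul,
    ← Submodule.Quotient.mk_smul, ← Submodule.Quotient.mk_add, Submodule.Quotient.eq]
  rw [key c k]
  exact ⟨(2:ℂ) • (tp c (k-3) * uu c ^ 3), rfl⟩
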